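/- Division theorem in the Weyl algebra: let w ∈ W, let F be a finite subset of W, let ≼ be a normal ordering of W, and let ≤ be the induced monomial ordering of K[X,Y]. Then there exist r ∈ W and a family (q_f)_{f∈F} of elements of W such that: (a) w = Σ_{f∈F} q_f f + r; (b) for every nonzero f ∈ F and every normal monomial s in the support of r, LT_≼(f) does not divide Φ(s) in K[X,Y]; (c) if w ≠ 0, then for every f ∈ F with q_f f ≠ 0 one has LT_≼(q_f f) ≤ LT_≼(w). -/

import Mathlib

/-- A total ordering on `S`: an antisymmetric, transitive and total binary relation. -/
def IsTotalOrdering {S : Type*} (r : S → S → Prop) : Prop :=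
  (∀ a b, r a b → r b a → a = b) ∧ (∀ a b c, r a b → r b c → r a c) ∧ (∀ a b, r a b ∨ r b a)

/-- `TO S` is the set of all total orderings on `S`. -/
def TO (S : Type*) : Type _ := {r : S → S → Prop // IsTotalOrdering r}

/-- The underlying relation of a total ordering. -/
def TO.rel {S : Type*} (r : TO S) : S → S → Prop := Subtype.val r

/-- The subbasic open set `𝔘_{(a,b)} = {≼ ∈ TO(S) : a ≼ b}`. -/
def USet {S : Type*} (a b : S) : Set (TO S) := {r | r.rel a b}

/-- The topology `𝒰` on `TO S`: the coarsest topology for which all `𝔘_{(a,b)}` are open. -/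
instance TOTop (S : Type*) : TopologicalSpace (TO S) :=
  TopologicalSpace.generateFrom {U | ∃ a b, U = USet a b}


open MvPolynomial

section Weyl

variable {K : Type*} [Field K] {n : ℕ} {W : Type*} [Ring W] [Algebra K W]

/-- The normal monomial `ξ^λ ∂^μ` of the Weyl algebra, for generators `ξ i` and `∂ i`. -/
def nm (ξ dd : Fin n → W) (lam mu : Fin n → ℕ) : W :=
  (List.ofFn fun i => ξ i ^ lam i).prod * (List.ofFn fun i => dd i ^ mu i).prod

/-- The set `N` of normal monomials `ξ^λ ∂^μ` of the Weyl algebra. -/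
def NormalMonomials (ξ dd : Fin n → W) : Set W := {w | ∃ lam mu, w = nm ξ dd lam mu}

/-- The normal monomial `ξ^λ ∂^μ` as an element of `N`. -/
def nmEl (ξ dd : Fin n → W) (lam mu : Fin n → ℕ) : ↥(NormalMonomials ξ dd) :=
  ⟨nm ξ dd lam mu, lam, mu, rfl⟩

/-- A normal ordering of the Weyl algebra: a total ordering `≼` on `N` such that
`1 = ξ^0∂^0 ≼ ξ^λ∂^μ` for all `λ, μ`, and which is compatible with the addition of
exponents. -/
def IsNormalOrdering (ξ dd : Fin n → W) (r : TO ↥(NormalMonomials ξ dd)) : Prop :=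
  (∀ lam mu, r.rel (nmEl ξ dd 0 0) (nmEl ξ dd lam mu)) ∧
  ∀ lam mu rho sig al be : Fin n → ℕ,
    r.rel (nmEl ξ dd lam mu) (nmEl ξ dd rho sig) →
      r.rel (nmEl ξ dd (lam + al) (mu + be)) (nmEl ξ dd (rho + al) (sig + be))

/-- The set `NO(N)` of all normal orderings. -/
def NOSet (ξ dd : Fin n → W) : Set (TO ↥(NormalMonomials ξ dd)) :=
  {r | IsNormalOrdering ξ dd r}

/-- The exponent vector `(λ, μ)` as a finitely supported function on `Fin n ⊕ Fin n`. -/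
noncomputable def expof {n : ℕ} (lam mu : Fin n → ℕ) : (Fin n ⊕ Fin n) →₀ ℕ :=
  Finsupp.equivFunOnFinite.symm (Sum.elim lam mu)

/-- The normal monomial of `N` corresponding to an exponent vector `d`. -/
noncomputable def nmD (ξ dd : Fin n → W) (d : (Fin n ⊕ Fin n) →₀ ℕ) :
    ↥(NormalMonomials ξ dd) :=
  nmEl ξ dd (fun i => d (Sum.inl i)) (fun i => d (Sum.inr i))

/-- The ordering on exponent vectors induced by a total ordering `r` on `N`. -/
noncomputable def rD (ξ dd : Fin n → W) (r : TO ↥(NormalMonomials ξ dd))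
    (d e : (Fin n ⊕ Fin n) →₀ ℕ) : Prop :=
  r.rel (nmD ξ dd d) (nmD ξ dd e)

/-- `IsLTerm ξ dd Φ r w d` says that the exponent vector `d`, i.e. the normal monomial
`ξ^λ∂^μ` with `(λ,μ) = d`, is the `r`-greatest element of the support of `w`, that is,
`lt_≼(w) = ξ^λ∂^μ` (equivalently `LT_≼(w) = X^λY^μ`). -/
noncomputable def IsLTerm (ξ dd : Fin n → W)
    (Φ : W ≃ₗ[K] MvPolynomial (Fin n ⊕ Fin n) K) (r : TO ↥(NormalMonomials ξ dd))
    (w : W) (d : (Fin n ⊕ Fin n) →₀ ℕ) : Prop :=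
  d ∈ (Φ w).support ∧ ∀ c ∈ (Φ w).support, rD ξ dd r c d

/-- The ideal `LT_≼(L) = ⟨LT_≼(x) : x ∈ L, x ≠ 0⟩` of `K[X,Y]`. -/
noncomputable def LTIdeal (ξ dd : Fin n → W)
    (Φ : W ≃ₗ[K] MvPolynomial (Fin n ⊕ Fin n) K) (r : TO ↥(NormalMonomials ξ dd))
    (L : Set W) : Ideal (MvPolynomial (Fin n ⊕ Fin n) K) :=
  Ideal.span {p | ∃ x ∈ L, x ≠ 0 ∧ ∃ d, IsLTerm ξ dd Φ r x d ∧ p = monomial d 1}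

/-- `B` is a Gröbner basis of the left ideal `L` with respect to `r`: `B` is a finite
subset of `L` with `L = Σ_{b∈B} W·b` and `LT_≼(L) = ⟨LT_≼(b) : b ∈ B, b ≠ 0⟩`. -/
noncomputable def IsGroebnerBasis (ξ dd : Fin n → W)
    (Φ : W ≃ₗ[K] MvPolynomial (Fin n ⊕ Fin n) K) (r : TO ↥(NormalMonomials ξ dd))
    (L : Submodule W W) (B : Finset W) : Prop :=
  (B : Set W) ⊆ (L : Set W) ∧ Submodule.span W (B : Set W) = L ∧
  LTIdeal ξ dd Φ r (L : Set W) =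
    Ideal.span {p | ∃ b ∈ B, b ≠ 0 ∧ ∃ d, IsLTerm ξ dd Φ r b d ∧ p = monomial d 1}

end Weyl

namespace WeylDiv
variable {W : Type*} [Ring W]

def pp {n : ℕ} (x : Fin n → W) (a : Fin n → ℕ) : W := (List.ofFn fun i => x i ^ a i).prod

lemma commute_pp {n : ℕ} {x : Fin n → W} {a : Fin n → ℕ} {z : W}
    (h : ∀ i, Commute z (x i ^ a i)) : Commute z (pp x a) := by
  apply Commute.list_prod_right
  intro y hy
  obtain ⟨i, hi⟩ := (List.mem_ofFn.mp hy)
  exact hi ▸ h i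

lemma pp_zero {n : ℕ} (x : Fin n → W) : pp x 0 = 1 := by
  apply List.prod_eq_one
  intro y hy
  obtain ⟨i, hi⟩ := (List.mem_ofFn.mp hy)
  simpa [Pi.zero_apply] using hi.symm

lemma pp_succ {n : ℕ} (x : Fin (n+1) → W) (a : Fin (n+1) → ℕ) :
    pp x a = x 0 ^ a 0 * pp (x ∘ Fin.succ) (a ∘ Fin.succ) := by
  simp [pp, List.ofFn_succ, Function.comp]

lemma pp_add {n : ℕ} {x : Fin n → W} (hx : ∀ i j, Commute (x i) (x j))
    (a b : Fin n → ℕ) : pp x (a + b) = pp x a * pp x b := by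
  induction n with
  | zero => simp [pp]
  | succ m ih =>
    rw [pp_succ, pp_succ x a, pp_succ x b]
    have htail : ∀ i j, Commute ((x ∘ Fin.succ) i) ((x ∘ Fin.succ) j) := fun i j => hx _ _
    rw [show ((a + b) ∘ Fin.succ) = a ∘ Fin.succ + b ∘ Fin.succ from rfl,
      ih htail, Pi.add_apply, pow_add]
    have hc : Commute (x 0 ^ b 0) (pp (x ∘ Fin.succ) (a ∘ Fin.succ)) :=
      commute_pp fun i => ((hx 0 i.succ).pow_pow _ _)
    rw [mul_assoc, mul_assoc, ← mul_assoc (x 0 ^ b 0), hc.eq, mul_assoc]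

lemma pp_single {n : ℕ} (x : Fin n → W) (i : Fin n) (k : ℕ) :
    pp x (Pi.single i k) = x i ^ k := by
  induction n with
  | zero => exact i.elim0
  | succ m ih =>
    rw [pp_succ]
    refine Fin.cases ?_ (fun j => ?_) i
    · have : (Pi.single (0 : Fin (m+1)) k) ∘ Fin.succ = 0 := by
        funext t; simp [Pi.single_apply, Function.comp, (Fin.succ_ne_zero t)]
      rw [this, pp_zero, mul_one]
      simp
    · have h0 : Pi.single (M := fun _ : Fin (m+1) => ℕ) (j.succ) k (0 : Fin (m+1)) = 0 := by
        simp [Pi.single_eq_of_ne (Fin.succ_ne_zero j).symm]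
      have htail : (Pi.single (j.succ) k) ∘ Fin.succ = Pi.single j k := by
        funext t; simp [Pi.single_apply, Function.comp, Fin.succ_inj]
      rw [h0, htail, pow_zero, one_mul, ih]; rfl

section Weyl

variable {K : Type*} [Field K] {n : ℕ} [Algebra K W]
variable {ξ dd : Fin n → W}

/-- The "lower terms" set. -/
def lowSet (ξ dd : Fin n → W) (lam mu : Fin n → ℕ) : Set W :=
  {w | ∃ lam' mu' γ : Fin n → ℕ, γ ≠ 0 ∧ lam' + γ = lam ∧ mu' + γ = mu ∧ w = nm ξ dd lam' mu'}

lemma nm_eq_pp (a b : Fin n → ℕ) : nm ξ dd a b = pp ξ a * pp dd b := rfl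

lemma mul_mem_span {S T : Set W} (a b : W)
    (h : ∀ s ∈ S, a * s * b ∈ Submodule.span K T)
    {E : W} (hE : E ∈ Submodule.span K S) : a * E * b ∈ Submodule.span K T := by
  induction hE using Submodule.span_induction with
  | mem s hs => exact h s hs
  | zero => simp
  | add u v _ _ hu hv => rw [mul_add, add_mul]; exact add_mem hu hv
  | smul c u _ hu => rw [mul_smul_comm, smul_mul_assoc]; exact Submodule.smul_mem _ c hu

variable (hξcomm : ∀ i j, ξ i * ξ j = ξ j * ξ i)
variable (hddcomm : ∀ i j, dd i * dd j = dd j * dd i)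
variable (hrel : ∀ i j, dd i * ξ j - ξ j * dd i = if i = j then (1 : W) else 0)

section
include hrel

lemma comm_ne {i j : Fin n} (h : i ≠ j) : Commute (dd i) (ξ j) := by
  have := hrel i j
  rw [if_neg h] at this
  exact sub_eq_zero.mp this

lemma dxi (i : Fin n) : dd i * ξ i = ξ i * dd i + 1 := by
  have := hrel i i
  rw [if_pos rfl] at this
  exact sub_eq_iff_eq_add'.mp this

end

include hrel in
lemma S0 (i : Fin n) (k : ℕ) :
    dd i * ξ i ^ (k+1) = ξ i ^ (k+1) * dd i + (k+1) • ξ i ^ k := by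
  induction k with
  | zero => simpa using dxi hrel i
  | succ k ih =>
    have : dd i * ξ i ^ (k+2) = (dd i * ξ i ^ (k+1)) * ξ i := by
      rw [mul_assoc, ← pow_succ]
    rw [this, ih, add_mul, smul_mul_assoc, ← pow_succ, mul_assoc, dxi hrel i, mul_add,
      mul_one, ← mul_assoc, ← pow_succ]
    rw [show (k+1+1) • ξ i ^ (k+1) = (k+1) • ξ i ^ (k+1) + ξ i ^ (k+1) from succ_nsmul _ _]
    abel

include hξcomm hrel in
lemma S1 (i : Fin n) (rho : Fin n → ℕ) :
    dd i * pp ξ rho = pp ξ rho * dd i + (rho i) • pp ξ (rho - Pi.single i 1) := by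
  set rho0 : Fin n → ℕ := fun j => if j = i then 0 else rho j with hrho0
  have hQ : Commute (dd i) (pp ξ rho0) := by
    apply commute_pp
    intro j
    by_cases hj : j = i
    · subst hj; rw [hrho0]; simp
    · exact (comm_ne hrel (fun h => hj h.symm)).pow_right _
  have hdecomp : rho = Pi.single i (rho i) + rho0 := by
    funext j
    by_cases hj : j = i <;> simp [hrho0, hj, Pi.single_apply]
  cases hri : rho i with
  | zero =>
    have : pp ξ rho = pp ξ rho0 := by
      rw [hdecomp, hri]
      simp only [Pi.single_zero, zero_add]
    rw [this, hQ.eq, zero_smul, add_zero]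
  | succ m =>
    have hc : ∀ a b, Commute (ξ a) (ξ b) := fun a b => hξcomm a b
    have h1 : pp ξ rho = ξ i ^ (m+1) * pp ξ rho0 := by
      rw [hdecomp, pp_add hc, pp_single, hri]
    have h2 : pp ξ (rho - Pi.single i 1) = ξ i ^ m * pp ξ rho0 := by
      have : rho - Pi.single i 1 = Pi.single i m + rho0 := by
        funext j
        by_cases hj : j = i <;>
          simp [hrho0, hj, Pi.single_apply, Pi.sub_apply] <;> omega
      rw [this, pp_add hc, pp_single]
    rw [h1, h2, ← mul_assoc, S0 hrel, add_mul, smul_mul_assoc, mul_assoc, hQ.eq,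
      ← mul_assoc]

include hξcomm hddcomm hrel in
lemma crossing : ∀ (N : ℕ) (be rho : Fin n → ℕ), (∑ i, be i) ≤ N →
    pp dd be * pp ξ rho - pp ξ rho * pp dd be ∈ Submodule.span K (lowSet ξ dd rho be) := by
  intro N
  induction N with
  | zero =>
    intro be rho hbe
    have : be = 0 := by
      funext j
      show be j = (0:ℕ)
      have := Finset.sum_le_sum_of_subset (f := be) (Finset.subset_univ {j})
      simp only [Finset.sum_singleton] at this
      omega
    rw [this, pp_zero, one_mul, mul_one, sub_self]
    exact zero_mem _
  | succ N ihN =>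
    intro be rho hbe
    by_cases hb0 : be = 0
    · rw [hb0, pp_zero, one_mul, mul_one, sub_self]
      exact zero_mem _
    · -- pick i with be i ≠ 0
      have : ∃ i, be i ≠ 0 := by
        by_contra h
        push_neg at h
        exact hb0 (funext fun j => h j)
      obtain ⟨i, hi⟩ := this
      set be0 : Fin n → ℕ := be - Pi.single i 1 with hbe0
      have hbedec : be = be0 + Pi.single i 1 := by
        funext j
        by_cases hj : j = i <;>
          simp [hbe0, hj, Pi.single_apply, Pi.sub_apply] <;> omega
      have hd : ∀ a b, Commute (dd a) (dd b) := fun a b => hddcomm a b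
      have hppbe : pp dd be = pp dd be0 * dd i := by
        conv_lhs => rw [hbedec]
        rw [pp_add hd, pp_single, pow_one]
      have hsum : (∑ j, be0 j) ≤ N := by
        have h1 : ∑ j, be0 j + (Finset.univ.sum (Pi.single i 1 : Fin n → ℕ)) = ∑ j, be j := by
          rw [← Finset.sum_add_distrib]
          exact Finset.sum_congr rfl fun j _ => by rw [hbedec]; rfl
        have h2 : Finset.univ.sum (Pi.single i 1 : Fin n → ℕ) = 1 := by
          simp [Pi.single_apply]
        omega
      set rho' : Fin n → ℕ := rho - Pi.single i 1 with hrho'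
      have hE1 := ihN be0 rho hsum
      have hE2 := ihN be0 rho' hsum
      set E1 := pp dd be0 * pp ξ rho - pp ξ rho * pp dd be0 with hE1d
      set E2 := pp dd be0 * pp ξ rho' - pp ξ rho' * pp dd be0 with hE2d
      have key : pp dd be * pp ξ rho - pp ξ rho * pp dd be
          = E1 * dd i + (rho i) • (pp ξ rho' * pp dd be0) + (rho i) • E2 := by
        have hS1 := S1 hξcomm hrel i rho
        rw [hppbe, mul_assoc, hS1, mul_add, mul_smul_comm, ← hrho']
        rw [hE1d, hE2d]
        rw [sub_mul, smul_sub]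
        rw [← mul_assoc, ← mul_assoc]
        abel
      rw [key]
      refine add_mem (add_mem ?_ ?_) ?_
      · -- E1 * dd i
        have := mul_mem_span (K := K) (1 : W) (dd i) (S := lowSet ξ dd rho be0)
          (T := lowSet ξ dd rho be) ?_ hE1
        · simpa using this
        · rintro s ⟨a, b, γ, hγ, ha, hb, rfl⟩
          apply Submodule.subset_span
          refine ⟨a, b + Pi.single i 1, γ, hγ, ha, ?_, ?_⟩
          · rw [add_right_comm, hb, ← hbedec]
          · rw [one_mul, nm_eq_pp, nm_eq_pp, pp_add hd, pp_single, pow_one, mul_assoc]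
      · -- middle term
        rcases Nat.eq_zero_or_pos (rho i) with h0 | hpos
        · rw [h0, zero_smul]; exact zero_mem _
        · refine nsmul_mem (Submodule.subset_span ?_) _
          refine ⟨rho', be0, Pi.single i 1, ?_, ?_, ?_, rfl⟩
          · intro h
            have := congrFun h i
            simp at this
          · funext j
            by_cases hj : j = i <;>
              simp [hrho', hj, Pi.single_apply, Pi.sub_apply] <;> omega
          · rw [← hbedec]
      · -- (rho i) • E2
        rcases Nat.eq_zero_or_pos (rho i) with h0 | hpos
        · rw [h0, zero_smul]; exact zero_mem _
        · refine nsmul_mem (Submodule.span_mono ?_ hE2) _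
          rintro s ⟨a, b, γ, hγ, ha, hb, rfl⟩
          refine ⟨a, b, γ + Pi.single i 1, ?_, ?_, ?_, rfl⟩
          · intro h
            have := congrFun h i
            simp [Pi.single_apply] at this
          · rw [← add_assoc, ha]
            funext j
            by_cases hj : j = i <;>
              simp [hrho', hj, Pi.single_apply, Pi.sub_apply] <;> omega
          · rw [← add_assoc, hb, ← hbedec]

include hξcomm hddcomm hrel in
lemma nm_mul_nm (al be rho sig : Fin n → ℕ) :
    nm ξ dd al be * nm ξ dd rho sig - nm ξ dd (al+rho) (be+sig) ∈
      Submodule.span K (lowSet ξ dd (al+rho) (be+sig)) := by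
  have hx : ∀ a b, Commute (ξ a) (ξ b) := fun a b => hξcomm a b
  have hd : ∀ a b, Commute (dd a) (dd b) := fun a b => hddcomm a b
  have hcross := crossing (K := K) hξcomm hddcomm hrel (∑ i, be i) be rho le_rfl
  set E := pp dd be * pp ξ rho - pp ξ rho * pp dd be with hEd
  have key : nm ξ dd al be * nm ξ dd rho sig - nm ξ dd (al+rho) (be+sig)
      = pp ξ al * E * pp dd sig := by
    rw [nm_eq_pp, nm_eq_pp, nm_eq_pp, pp_add hx, pp_add hd, hEd]
    rw [mul_sub, sub_mul]
    congr 1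
    · simp only [mul_assoc]
    · simp only [mul_assoc]
  rw [key]
  refine mul_mem_span (K := K) (S := lowSet ξ dd rho be) (T := lowSet ξ dd (al+rho) (be+sig)) _ _ ?_ hcross
  rintro s ⟨a, b, γ, hγ, ha, hb, rfl⟩
  apply Submodule.subset_span
  refine ⟨al + a, b + sig, γ, hγ, ?_, ?_, ?_⟩
  · rw [add_assoc, ha]
  · rw [add_right_comm, hb]
  · rw [nm_eq_pp, nm_eq_pp, pp_add hx, pp_add hd]
    simp only [mul_assoc]


section Phi
open MvPolynomial

lemma expof_apply_inl (lam mu : Fin n → ℕ) (i : Fin n) : expof lam mu (Sum.inl i) = lam i := rfl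
lemma expof_apply_inr (lam mu : Fin n → ℕ) (i : Fin n) : expof lam mu (Sum.inr i) = mu i := rfl

lemma expof_split (d : (Fin n ⊕ Fin n) →₀ ℕ) :
    expof (fun i => d (Sum.inl i)) (fun i => d (Sum.inr i)) = d := by
  ext s
  cases s <;> rfl

lemma expof_add (a b c e : Fin n → ℕ) :
    expof (a + c) (b + e) = expof a b + expof c e := by
  ext s
  cases s <;> simp [expof_apply_inl, expof_apply_inr, Finsupp.add_apply] <;> rfl

lemma expof_eq_zero {γ : Fin n → ℕ} (h : expof γ γ = 0) : γ = 0 := by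
  funext i
  have := congrArg (fun g => g (Sum.inl i)) h
  simpa [expof_apply_inl] using this

variable (Φ : W ≃ₗ[K] MvPolynomial (Fin n ⊕ Fin n) K)
variable (hΦ : ∀ lam mu, Φ (nm ξ dd lam mu) = MvPolynomial.monomial (expof lam mu) 1)

include hΦ in
lemma hΦd (d : (Fin n ⊕ Fin n) →₀ ℕ) :
    Φ (nm ξ dd (fun i => d (Sum.inl i)) (fun i => d (Sum.inr i))) = monomial d 1 := by
  rw [hΦ, expof_split]

lemma support_span_monomials {D : Set ((Fin n ⊕ Fin n) →₀ ℕ)} {p : MvPolynomial (Fin n ⊕ Fin n) K}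
    (hp : p ∈ Submodule.span K {q | ∃ d ∈ D, q = monomial d (1:K)}) :
    ∀ x ∈ p.support, x ∈ D := by
  induction hp using Submodule.span_induction with
  | mem q hq =>
    obtain ⟨d, hd, rfl⟩ := hq
    intro x hx
    classical
    rw [support_monomial] at hx
    simp only [if_neg (one_ne_zero (α := K))] at hx
    rwa [Finset.mem_singleton.mp hx]
  | zero => simp
  | add u v _ _ hu hv =>
    intro x hx
    rcases Finset.mem_union.mp (Finsupp.support_add hx) with h | h
    · exact hu x h
    · exact hv x h
  | smul c u _ hu =>
    intro x hx
    exact hu x (support_smul hx)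

include hξcomm hddcomm hrel hΦ in
lemma key_step (e : (Fin n ⊕ Fin n) →₀ ℕ) (f : W) :
    ∃ err : MvPolynomial (Fin n ⊕ Fin n) K,
      Φ (nm ξ dd (fun i => e (Sum.inl i)) (fun i => e (Sum.inr i)) * f)
        = monomial e (1:K) * Φ f + err ∧
      ∀ x ∈ err.support, ∃ d ∈ (Φ f).support, ∃ γ : Fin n → ℕ,
        γ ≠ 0 ∧ x + expof γ γ = e + d := by
  classical
  set e1 : Fin n → ℕ := fun i => e (Sum.inl i) with he1
  set e2 : Fin n → ℕ := fun i => e (Sum.inr i) with he2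
  have hee : expof e1 e2 = e := expof_split e
  set c : ((Fin n ⊕ Fin n) →₀ ℕ) → K := fun d => coeff d (Φ f) with hc
  set G : ((Fin n ⊕ Fin n) →₀ ℕ) → W :=
    fun d => nm ξ dd (fun i => d (Sum.inl i)) (fun i => d (Sum.inr i)) with hG
  have hf : f = ∑ d ∈ (Φ f).support, c d • G d := by
    apply Φ.injective
    rw [map_sum]
    simp_rw [map_smul, hG, hΦd (ξ := ξ) (dd := dd) Φ hΦ, hc]
    conv_lhs => rw [as_sum (Φ f)]
    exact Finset.sum_congr rfl fun d _ => by rw [smul_monomial, smul_eq_mul, mul_one]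
  set err : MvPolynomial (Fin n ⊕ Fin n) K :=
    ∑ d ∈ (Φ f).support, c d • (Φ (nm ξ dd e1 e2 * G d) - monomial (e + d) 1) with herr
  refine ⟨err, ?_, ?_⟩
  · conv_lhs => rw [hf]
    rw [Finset.mul_sum, map_sum]
    simp_rw [mul_smul_comm, map_smul]
    have hRHS : monomial e (1:K) * Φ f = ∑ d ∈ (Φ f).support, c d • monomial (e + d) (1:K) := by
      conv_lhs => rw [as_sum (Φ f)]
      rw [Finset.mul_sum]
      refine Finset.sum_congr rfl fun d _ => ?_
      rw [monomial_mul, smul_monomial, one_mul, smul_eq_mul, mul_one]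
    rw [hRHS, herr, ← Finset.sum_add_distrib]
    refine Finset.sum_congr rfl fun d _ => ?_
    rw [← smul_add]
    congr 1
    abel
  · intro x hx
    have hsub := MvPolynomial.support_sum (s := (Φ f).support)
      (f := fun d => c d • (Φ (nm ξ dd e1 e2 * G d) - monomial (e + d) 1)) hx
    obtain ⟨d, hd, hxd⟩ := Finset.mem_biUnion.mp hsub
    refine ⟨d, hd, ?_⟩
    have hxd2 : x ∈ (Φ (nm ξ dd e1 e2 * G d) - monomial (e + d) 1).support :=
      support_smul hxd
    -- identify the difference with Φ of the low part
    have hlow := nm_mul_nm (K := K) hξcomm hddcomm hrel e1 e2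
      (fun i => d (Sum.inl i)) (fun i => d (Sum.inr i))
    have hmon : Φ (nm ξ dd (e1 + fun i => d (Sum.inl i)) (e2 + fun i => d (Sum.inr i)))
        = monomial (e + d) 1 := by
      rw [hΦ, expof_add, hee, expof_split]
    have heq : Φ (nm ξ dd e1 e2 * G d) - monomial (e + d) 1
        = Φ (nm ξ dd e1 e2 * G d - nm ξ dd (e1 + fun i => d (Sum.inl i))
            (e2 + fun i => d (Sum.inr i))) := by
      rw [map_sub, hmon]
    rw [heq] at hxd2
    have hmem : Φ (nm ξ dd e1 e2 * G d - nm ξ dd (e1 + fun i => d (Sum.inl i))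
            (e2 + fun i => d (Sum.inr i))) ∈
        Submodule.span K {q | ∃ y ∈ {x : (Fin n ⊕ Fin n) →₀ ℕ |
            ∃ γ : Fin n → ℕ, γ ≠ 0 ∧ x + expof γ γ = e + d}, q = monomial y (1:K)} := by
      have himg := Submodule.apply_mem_span_image_of_mem_span Φ.toLinearMap hlow
      refine Submodule.span_mono ?_ himg
      rintro q ⟨w', ⟨a, b, γ, hγ, ha, hb, rfl⟩, rfl⟩
      refine ⟨expof a b, ⟨γ, hγ, ?_⟩, by rw [LinearEquiv.coe_coe, hΦ]⟩
      rw [← expof_add, ha, hb, expof_add, hee, expof_split]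
    exact (support_span_monomials hmem) x hxd2

end Phi


section Order
variable (r : TO ↥(NormalMonomials ξ dd)) (hr : IsNormalOrdering ξ dd r)

lemma rD_refl (d : (Fin n ⊕ Fin n) →₀ ℕ) : rD ξ dd r d d :=
  (r.2.2.2 (nmD ξ dd d) (nmD ξ dd d)).elim id id

lemma rD_trans {a b c : (Fin n ⊕ Fin n) →₀ ℕ} (h1 : rD ξ dd r a b) (h2 : rD ξ dd r b c) :
    rD ξ dd r a c := r.2.2.1 _ _ _ h1 h2

lemma rD_total (a b : (Fin n ⊕ Fin n) →₀ ℕ) : rD ξ dd r a b ∨ rD ξ dd r b a :=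
  r.2.2.2 _ _

variable (Φ : W ≃ₗ[K] MvPolynomial (Fin n ⊕ Fin n) K)
variable (hΦ : ∀ lam mu, Φ (nm ξ dd lam mu) = MvPolynomial.monomial (expof lam mu) 1)

include hΦ in
lemma rD_antisymm {a b : (Fin n ⊕ Fin n) →₀ ℕ}
    (h1 : rD ξ dd r a b) (h2 : rD ξ dd r b a) : a = b := by
  have h := r.2.1 _ _ h1 h2
  have hval : (nmD ξ dd a : W) = (nmD ξ dd b : W) := congrArg Subtype.val h
  have : (MvPolynomial.monomial a (1:K)) = MvPolynomial.monomial b 1 := by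
    rw [← hΦd Φ hΦ a, ← hΦd Φ hΦ b]
    exact congrArg Φ hval
  classical
  have hsupp := congrArg MvPolynomial.support this
  rw [MvPolynomial.support_monomial, MvPolynomial.support_monomial,
    if_neg (one_ne_zero (α := K)), if_neg (one_ne_zero (α := K))] at hsupp
  exact Finset.singleton_injective hsupp

include hr in
lemma rD_zero (d : (Fin n ⊕ Fin n) →₀ ℕ) : rD ξ dd r 0 d := by
  have h := hr.1 (fun i => d (Sum.inl i)) (fun i => d (Sum.inr i))
  have h0 : nmD ξ dd (0 : (Fin n ⊕ Fin n) →₀ ℕ) = nmEl ξ dd 0 0 := by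
    unfold nmD
    congr 1 <;> (funext i; simp)
  show r.rel (nmD ξ dd 0) (nmD ξ dd d)
  rw [h0]
  exact h

include hr in
lemma rD_add_right {d e : (Fin n ⊕ Fin n) →₀ ℕ} (g : (Fin n ⊕ Fin n) →₀ ℕ)
    (h : rD ξ dd r d e) : rD ξ dd r (d + g) (e + g) := by
  have h2 := hr.2 (fun i => d (Sum.inl i)) (fun i => d (Sum.inr i))
    (fun i => e (Sum.inl i)) (fun i => e (Sum.inr i))
    (fun i => g (Sum.inl i)) (fun i => g (Sum.inr i)) h
  unfold rD nmD
  have hl : (fun i => (d + g) (Sum.inl i))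
      = (fun i => d (Sum.inl i)) + (fun i => g (Sum.inl i)) := by
    funext i; simp [Finsupp.add_apply]
  have hl2 : (fun i => (d + g) (Sum.inr i))
      = (fun i => d (Sum.inr i)) + (fun i => g (Sum.inr i)) := by
    funext i; simp [Finsupp.add_apply]
  have hl3 : (fun i => (e + g) (Sum.inl i))
      = (fun i => e (Sum.inl i)) + (fun i => g (Sum.inl i)) := by
    funext i; simp [Finsupp.add_apply]
  have hl4 : (fun i => (e + g) (Sum.inr i))
      = (fun i => e (Sum.inr i)) + (fun i => g (Sum.inr i)) := by
    funext i; simp [Finsupp.add_apply]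
  rw [hl, hl2, hl3, hl4]
  exact h2

include hr in
lemma rD_le {d e : (Fin n ⊕ Fin n) →₀ ℕ} (h : d ≤ e) : rD ξ dd r d e := by
  obtain ⟨c, rfl⟩ := le_iff_exists_add.mp h
  have := rD_add_right (r := r) hr d (rD_zero (r := r) hr c)
  rwa [zero_add, add_comm] at this

lemma exists_rmax (s : Finset ((Fin n ⊕ Fin n) →₀ ℕ)) (hs : s.Nonempty) :
    ∃ d ∈ s, ∀ x ∈ s, rD ξ dd r x d := by
  classical
  induction s using Finset.induction with
  | empty => exact absurd hs (by simp)
  | @insert a s ha ih =>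
    rcases s.eq_empty_or_nonempty with rfl | hsne
    · exact ⟨a, Finset.mem_insert_self _ _, fun x hx => by
        rw [Finset.mem_insert] at hx
        rcases hx with rfl | hx
        · exact rD_refl r x
        · simp at hx⟩
    · obtain ⟨d, hd, hmax⟩ := ih hsne
      rcases rD_total (r := r) a d with h | h
      · exact ⟨d, Finset.mem_insert_of_mem hd, fun x hx => by
          rcases Finset.mem_insert.mp hx with rfl | hx
          · exact h
          · exact hmax x hx⟩
      · exact ⟨a, Finset.mem_insert_self _ _, fun x hx => by
          rcases Finset.mem_insert.mp hx with rfl | hx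
          · exact rD_refl r x
          · exact rD_trans r (hmax x hx) h⟩

include hr hΦ in
lemma rD_wf : WellFounded
    (fun d e : (Fin n ⊕ Fin n) →₀ ℕ => rD ξ dd r d e ∧ d ≠ e) := by
  haveI : IsIrrefl ((Fin n ⊕ Fin n) →₀ ℕ) (fun d e => rD ξ dd r d e ∧ d ≠ e) :=
    ⟨fun a h => h.2 rfl⟩
  haveI : IsTrans ((Fin n ⊕ Fin n) →₀ ℕ) (fun d e => rD ξ dd r d e ∧ d ≠ e) := by
    refine ⟨fun a b c h1 h2 => ⟨rD_trans r h1.1 h2.1, fun he => ?_⟩⟩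
    have h5 : rD ξ dd r c b := by rw [← he]; exact h1.1
    exact h2.2 (rD_antisymm (r := r) Φ hΦ h2.1 h5)
  haveI : IsStrictOrder ((Fin n ⊕ Fin n) →₀ ℕ) (fun d e => rD ξ dd r d e ∧ d ≠ e) := {}
  rw [RelEmbedding.wellFounded_iff_isEmpty]
  constructor
  intro emb
  set f : ℕ → ((Fin n ⊕ Fin n) →₀ ℕ) := fun k => emb k with hf
  have hdesc : ∀ k, rD ξ dd r (f (k+1)) (f k) ∧ f (k+1) ≠ f k := fun k =>
    emb.map_rel_iff.mpr (Nat.lt_succ_self k)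
  have hchain : ∀ i j, i < j → rD ξ dd r (f j) (f i) ∧ f j ≠ f i := by
    intro i j hij
    induction j with
    | zero => omega
    | succ j ihj =>
      rcases Nat.lt_or_ge i j with h | h
      · obtain ⟨h1, h2⟩ := ihj h
        obtain ⟨h3, h4⟩ := hdesc j
        refine ⟨rD_trans r h3 h1, fun he => ?_⟩
        have h5 : rD ξ dd r (f j) (f (j+1)) := by rw [he]; exact h1
        exact h4 (rD_antisymm (r := r) Φ hΦ h3 h5)
      · have : i = j := by omega
        subst this
        exact hdesc i
  obtain ⟨g, hg⟩ := (Set.isPWO_of_wellQuasiOrderedLE (Set.univ : Set ((Fin n ⊕ Fin n) →₀ ℕ))).exists_monotone_subseq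
    (f := f) (fun _ => Set.mem_univ _)
  have h01 : g 0 < g 1 := g.strictMono (Nat.lt_succ_self 0)
  have hle := hg (Nat.zero_le 1)
  obtain ⟨h1, h2⟩ := hchain (g 0) (g 1) h01
  exact h2 (rD_antisymm (r := r) Φ hΦ h1 (rD_le (r := r) hr hle))

end Order

section Main
open MvPolynomial
variable (Φ : W ≃ₗ[K] MvPolynomial (Fin n ⊕ Fin n) K)
variable (r : TO ↥(NormalMonomials ξ dd))
variable (hΦ : ∀ lam mu, Φ (nm ξ dd lam mu) = MvPolynomial.monomial (expof lam mu) 1)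
variable (hr : IsNormalOrdering ξ dd r)

include hξcomm hddcomm hrel hΦ hr in
lemma division_main (F : Finset W) :
    ∀ (dw : (Fin n ⊕ Fin n) →₀ ℕ) (w : W), (∀ x ∈ (Φ w).support, rD ξ dd r x dw) →
    ∃ (rem : W) (q : W → W),
      w = (∑ f ∈ F, q f * f) + rem ∧
      (∀ f ∈ F, f ≠ 0 → ∀ s ∈ (Φ rem).support, ∀ df, IsLTerm ξ dd Φ r f df → ¬ df ≤ s) ∧
      (∀ f ∈ F, ∀ x ∈ (Φ (q f * f)).support, rD ξ dd r x dw) := by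
  classical
  intro dw
  refine (rD_wf (ξ := ξ) (dd := dd) r hr Φ hΦ).induction
    (C := fun d => ∀ w : W, (∀ x ∈ (Φ w).support, rD ξ dd r x d) →
      ∃ (rem : W) (q : W → W),
        w = (∑ f ∈ F, q f * f) + rem ∧
        (∀ f ∈ F, f ≠ 0 → ∀ s ∈ (Φ rem).support, ∀ df, IsLTerm ξ dd Φ r f df → ¬ df ≤ s) ∧
        (∀ f ∈ F, ∀ x ∈ (Φ (q f * f)).support, rD ξ dd r x d)) dw ?_
  intro dw IH w hw
  by_cases hw0 : w = 0
  · refine ⟨0, fun _ => 0, by simp [hw0], by simp, ?_⟩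
    intro f _ x hx
    simp at hx
  -- w ≠ 0
  have hΦw : Φ w ≠ 0 := fun h => hw0 (by
    have := congrArg Φ.symm h
    simpa using this)
  have hsupp : (Φ w).support.Nonempty := by
    rw [Finset.nonempty_iff_ne_empty]
    intro h
    exact hΦw (support_eq_empty.mp h)
  obtain ⟨dmax, hdmaxmem, hdmax⟩ := exists_rmax (r := r) _ hsupp
  have hdmaxdw : rD ξ dd r dmax dw := hw dmax hdmaxmem
  -- the indicator-sum helper
  have hsum_ind : ∀ u : W, ∀ f ∈ F, (∑ g ∈ F, (if g = f then u else 0) * g) = u * f := by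
    intro u f hfF
    rw [Finset.sum_eq_single f]
    · rw [if_pos rfl]
    · intro b _ hb
      rw [if_neg hb, zero_mul]
    · intro h
      exact absurd hfF h
  by_cases hA : ∃ f ∈ F, f ≠ 0 ∧ ∃ df, IsLTerm ξ dd Φ r f df ∧ df ≤ dmax
  · obtain ⟨f, hfF, hf0, df, hdf, hdfle⟩ := hA
    set e : (Fin n ⊕ Fin n) →₀ ℕ := dmax - df with he
    have hedf : e + df = dmax := tsub_add_cancel_of_le hdfle
    set a : K := coeff df (Φ f) with ha
    have ha0 : a ≠ 0 := mem_support_iff.mp hdf.1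
    set cc : K := coeff dmax (Φ w) with hcc
    obtain ⟨err, herr, herrsupp⟩ := key_step hξcomm hddcomm hrel Φ hΦ e f
    set u0 : W := nm ξ dd (fun i => e (Sum.inl i)) (fun i => e (Sum.inr i)) with hu0
    set u : W := (cc * a⁻¹) • u0 with hu
    have hΦuf : Φ (u * f) = (cc * a⁻¹) • (monomial e (1:K) * Φ f + err) := by
      rw [hu, smul_mul_assoc, map_smul, herr]
    have hufsup : ∀ x ∈ (Φ (u * f)).support, rD ξ dd r x dmax := by
      intro x hx
      rw [hΦuf] at hx
      have hx' : x ∈ (monomial e (1:K) * Φ f + err).support := support_smul hx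
      rcases Finset.mem_union.mp (MvPolynomial.support_add hx') with h | h
      · have hco := mem_support_iff.mp h
        rw [coeff_monomial_mul'] at hco
        by_cases hle : e ≤ x
        · rw [if_pos hle, one_mul] at hco
          have hxe : x - e ∈ (Φ f).support := mem_support_iff.mpr hco
          have h1 : rD ξ dd r (x - e) df := hdf.2 _ hxe
          have h2 := rD_add_right (r := r) hr e h1
          rwa [tsub_add_cancel_of_le hle, add_comm df e, hedf] at h2
        · exact absurd (if_neg hle) (fun h' => hco (by rw [h']))
      · obtain ⟨d, hd, γ, hγ, hxg⟩ := herrsupp x h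
        have h1 : rD ξ dd r x (e + d) := by
          have := rD_le (r := r) hr (self_le_add_right x (expof γ γ))
          rwa [hxg] at this
        have h2 : rD ξ dd r (d + e) (df + e) := rD_add_right (r := r) hr e (hdf.2 d hd)
        rw [add_comm d e, add_comm df e, hedf] at h2
        exact rD_trans r h1 h2
    have hcoefuf : coeff dmax (Φ (u * f)) = cc := by
      have herr0 : coeff dmax err = 0 := by
        by_contra h0
        obtain ⟨d, hd, γ, hγ, hxg⟩ := herrsupp dmax (mem_support_iff.mpr h0)
        have h1 : rD ξ dd r dmax (e + d) := by
          have := rD_le (r := r) hr (self_le_add_right dmax (expof γ γ))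
          rwa [hxg] at this
        have h2 : rD ξ dd r (d + e) (df + e) := rD_add_right (r := r) hr e (hdf.2 d hd)
        rw [add_comm d e, add_comm df e, hedf] at h2
        have heq := rD_antisymm (r := r) Φ hΦ h1 h2
        rw [← heq] at hxg
        have hx0 : expof γ γ = 0 := by
          have hxx : dmax + expof γ γ = dmax + 0 := by rw [add_zero]; exact hxg
          exact add_left_cancel hxx
        exact hγ (expof_eq_zero hx0)
      rw [hΦuf, coeff_smul, coeff_add, herr0, add_zero, ← hedf, coeff_monomial_mul,
        one_mul, smul_eq_mul, mul_assoc, inv_mul_cancel₀ ha0, mul_one]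
    set w' : W := w - u * f with hw'
    have hw'supp : ∀ x ∈ (Φ w').support, rD ξ dd r x dmax ∧ x ≠ dmax := by
      intro x hx
      have hxne : x ≠ dmax := by
        intro hxe
        subst hxe
        have := mem_support_iff.mp hx
        rw [hw', map_sub, coeff_sub, hcoefuf, ← hcc, sub_self] at this
        exact this rfl
      refine ⟨?_, hxne⟩
      rw [hw', map_sub] at hx
      rcases Finset.mem_union.mp (support_sub _ _ _ hx) with h | h
      · exact hdmax x h
      · exact hufsup x h
    by_cases hw'0 : w' = 0
    · have hwuf : w = u * f := by
        have := sub_eq_zero.mp (hw' ▸ hw'0)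
        exact this
      refine ⟨0, fun g => if g = f then u else 0, ?_, by simp, ?_⟩
      · rw [hsum_ind u f hfF, add_zero, hwuf]
      · intro g hg x hx
        by_cases hgf : g = f
        · subst hgf
          simp only [eq_self_iff_true, if_true] at hx
          rw [← hwuf] at hx
          exact hw x hx
        · simp [if_neg hgf] at hx
    · have hsupp' : (Φ w').support.Nonempty := by
        rw [Finset.nonempty_iff_ne_empty]
        intro h
        exact hw'0 (by simpa using support_eq_empty.mp h)
      obtain ⟨dmax', hdmem', hdmax'⟩ := exists_rmax (r := r) _ hsupp'
      obtain ⟨hd'le, hd'ne⟩ := hw'supp dmax' hdmem'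
      have hltdw : rD ξ dd r dmax' dw ∧ dmax' ≠ dw := by
        refine ⟨rD_trans r hd'le hdmaxdw, fun heq => ?_⟩
        have : dmax = dw := rD_antisymm (r := r) Φ hΦ hdmaxdw (heq ▸ hd'le)
        exact hd'ne (heq.trans this.symm)
      obtain ⟨rem', q', ha', hb', hc'⟩ := IH dmax' hltdw w' (fun x hx => hdmax' x hx)
      refine ⟨rem', fun g => q' g + if g = f then u else 0, ?_, hb', ?_⟩
      · have hsum : (∑ g ∈ F, (q' g + if g = f then u else 0) * g)
            = (∑ g ∈ F, q' g * g) + u * f := by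
          simp_rw [add_mul]
          rw [Finset.sum_add_distrib, hsum_ind u f hfF]
        rw [hsum]
        have hww : w = u * f + w' := by rw [hw']; abel
        rw [hww]
        conv_lhs => rw [ha']
        abel
      · intro g hg x hx
        rw [add_mul, map_add] at hx
        rcases Finset.mem_union.mp (Finsupp.support_add hx) with h | h
        · exact rD_trans r (hc' g hg x h) hltdw.1
        · by_cases hgf : g = f
          · subst hgf
            simp only [eq_self_iff_true, if_true] at h
            exact rD_trans r (hufsup x h) hdmaxdw
          · simp [if_neg hgf] at h
  · push_neg at hA
    set cc : K := coeff dmax (Φ w) with hcc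
    have hcc0 : cc ≠ 0 := mem_support_iff.mp hdmaxmem
    set mw : W := Φ.symm (monomial dmax cc) with hmw
    have hΦmw : Φ mw = monomial dmax cc := Φ.apply_symm_apply _
    set w' : W := w - mw with hw'
    have hΦw' : Φ w' = Φ w - monomial dmax cc := by rw [hw', map_sub, hΦmw]
    have hw'supp : ∀ x ∈ (Φ w').support, rD ξ dd r x dmax ∧ x ≠ dmax := by
      intro x hx
      have hxne : x ≠ dmax := by
        intro hxe
        subst hxe
        have := mem_support_iff.mp hx
        rw [hΦw', coeff_sub, coeff_monomial, if_pos rfl, ← hcc, sub_self] at this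
        exact this rfl
      refine ⟨?_, hxne⟩
      have hxw : x ∈ (Φ w).support := by
        rw [mem_support_iff]
        have := mem_support_iff.mp hx
        rwa [hΦw', coeff_sub, coeff_monomial, if_neg (fun h => hxne h.symm), sub_zero] at this
      exact hdmax x hxw
    by_cases hw'0 : w' = 0
    · refine ⟨w, fun _ => 0, by simp, ?_, ?_⟩
      · intro f hfF hf0 s hs df hdf hle
        have hweq : Φ w = monomial dmax cc := by
          have := sub_eq_zero.mp (hw' ▸ hw'0)
          rw [this, hΦmw]
        rw [hweq, support_monomial, if_neg hcc0] at hs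
        rw [Finset.mem_singleton.mp hs] at hle
        exact hA f hfF hf0 df hdf hle
      · intro g hg x hx
        simp at hx
    · have hsupp' : (Φ w').support.Nonempty := by
        rw [Finset.nonempty_iff_ne_empty]
        intro h
        exact hw'0 (by simpa using support_eq_empty.mp h)
      obtain ⟨dmax', hdmem', hdmax'⟩ := exists_rmax (r := r) _ hsupp'
      obtain ⟨hd'le, hd'ne⟩ := hw'supp dmax' hdmem'
      have hltdw : rD ξ dd r dmax' dw ∧ dmax' ≠ dw := by
        refine ⟨rD_trans r hd'le hdmaxdw, fun heq => ?_⟩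
        have : dmax = dw := rD_antisymm (r := r) Φ hΦ hdmaxdw (heq ▸ hd'le)
        exact hd'ne (heq.trans this.symm)
      obtain ⟨rem', q', ha', hb', hc'⟩ := IH dmax' hltdw w' (fun x hx => hdmax' x hx)
      refine ⟨rem' + mw, q', ?_, ?_, ?_⟩
      · have hww : w = w' + mw := by rw [hw']; abel
        rw [hww]
        conv_lhs => rw [ha']
        rw [add_assoc]
      · intro f hfF hf0 s hs df hdf hle
        rw [map_add, hΦmw] at hs
        rcases Finset.mem_union.mp (Finsupp.support_add hs) with h | h
        · exact hb' f hfF hf0 s h df hdf hle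
        · have hsm := Finset.mem_singleton.mp (support_monomial_subset h)
          rw [hsm] at hle
          exact hA f hfF hf0 df hdf hle
      · intro g hg x hx
        exact rD_trans r (hc' g hg x hx) hltdw.1

end Main
end Weyl
end WeylDiv



/-- division theorem in the Weyl algebra: for `w ∈ W`, a finite `F ⊆ W` and a
normal ordering `≼`, there are `rem ∈ W` and `(q_f)_{f∈F}` with
(a) `w = Σ_{f∈F} q_f·f + rem`;
(b) for nonzero `f ∈ F`, `LT_≼(f)` divides `Φ(s)` for no `s ∈ Supp(rem)`;
(c) if `w ≠ 0` then `LT_≼(q_f·f) ≤ LT_≼(w)` whenever `q_f·f ≠ 0`. -/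
theorem division_theorem
    {K : Type*} [Field K] [CharZero K] {n : ℕ} (hn : 1 ≤ n)
    {W : Type*} [Ring W] [Algebra K W] (ξ dd : Fin n → W)
    (hξcomm : ∀ i j, ξ i * ξ j = ξ j * ξ i)
    (hddcomm : ∀ i j, dd i * dd j = dd j * dd i)
    (hrel : ∀ i j, dd i * ξ j - ξ j * dd i = if i = j then (1 : W) else 0)
    (Φ : W ≃ₗ[K] MvPolynomial (Fin n ⊕ Fin n) K)
    (hΦ : ∀ lam mu, Φ (nm ξ dd lam mu) = MvPolynomial.monomial (expof lam mu) 1)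
    (r : TO ↥(NormalMonomials ξ dd)) (hr : IsNormalOrdering ξ dd r)
    (w : W) (F : Finset W) :
    ∃ (rem : W) (q : W → W),
      w = (∑ f ∈ F, q f * f) + rem ∧
      (∀ f ∈ F, f ≠ 0 → ∀ s ∈ (Φ rem).support, ∀ df, IsLTerm ξ dd Φ r f df →
        ¬ (MvPolynomial.monomial df (1 : K) ∣ MvPolynomial.monomial s (1 : K))) ∧
      (w ≠ 0 → ∀ f ∈ F, q f * f ≠ 0 → ∀ dq dw, IsLTerm ξ dd Φ r (q f * f) dq →
        IsLTerm ξ dd Φ r w dw → rD ξ dd r dq dw) := by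

  classical
  by_cases hw0 : w = 0
  · refine ⟨0, fun _ => 0, by simp [hw0], by simp, ?_⟩
    intro h
    exact absurd hw0 h
  · have hΦw : Φ w ≠ 0 := fun h => hw0 (by
      have := congrArg Φ.symm h
      simpa using this)
    have hsupp : (Φ w).support.Nonempty := by
      rw [Finset.nonempty_iff_ne_empty]
      intro h
      exact hΦw (MvPolynomial.support_eq_empty.mp h)
    obtain ⟨dw0, hdwmem, hdwmax⟩ := WeylDiv.exists_rmax (ξ := ξ) (dd := dd) r _ hsupp
    obtain ⟨rem, q, hA, hB, hC⟩ := WeylDiv.division_main hξcomm hddcomm hrel Φ r hΦ hr F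
      dw0 w (fun x hx => hdwmax x hx)
    refine ⟨rem, q, hA, ?_, ?_⟩
    · intro f hfF hf0 s hs df hdf hdvd
      have hle : df ≤ s := by
        rcases (MvPolynomial.monomial_dvd_monomial.mp hdvd).1 with h | h
        · exact absurd h one_ne_zero
        · exact h
      exact hB f hfF hf0 s hs df hdf hle
    · intro _ f hfF hqf hdq hdw' h1 h2
      have hx := hC f hfF hdq h1.1
      exact WeylDiv.rD_trans r hx (h2.2 dw0 hdwmem)
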